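/- Let d, K be positive integers, and let α, γ, λ, L > 0 be reals. Let {σ_k}_{k=1}^K and {β_k}_{k=1}^K be nonnegative reals, and let x₁, …, x_K ∈ ℝ^d satisfy ‖x_k‖₂ ≤ L. Define d×d matrices and weights recursively by Z₁ = λ·I_d and, for k ≥ 1, σ̄_k = max{σ_k, α, γ·(‖x_k‖_{Z_k^{-1}})^{1/2}} and Z_{k+1} = Z_k + x_k x_kᵀ / σ̄_k². Set ι = log(1 + K L² / (d λ α²)). Then Σ_{k=1}^K min{1, β_k ‖x_k‖_{Z_k^{-1}}} ≤ 2 d ι + 2 (max_{k∈[K]} β_k) γ² d ι + 2 √(d ι) · √(Σ_{k=1}^K β_k² (σ_k² + α²)). -/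

import Mathlib

open Matrix Finset

lemma amgm {d : ℕ} (hd : 0 < d) (z : Fin d → ℝ) (hz : ∀ i, 0 ≤ z i) :
    ∏ i, z i ≤ ((∑ i, z i) / d) ^ d := by
  have hw : ∀ i ∈ (univ : Finset (Fin d)), (0:ℝ) ≤ (d:ℝ)⁻¹ := fun _ _ => by positivity
  have hw1 : ∑ _i : Fin d, (d:ℝ)⁻¹ = 1 := by
    simp [Finset.sum_const]
    field_simp
  have hgm := Real.geom_mean_le_arith_mean_weighted univ (fun _ => (d:ℝ)⁻¹) z hw hw1
    (fun i _ => hz i)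
  have h2 : ∏ i, z i = (∏ i, z i ^ ((d:ℝ)⁻¹)) ^ (d:ℕ) := by
    rw [← Finset.prod_pow]
    congr 1; funext i
    rw [← Real.rpow_natCast (z i ^ ((d:ℝ)⁻¹)) d, ← Real.rpow_mul (hz i)]
    simp [inv_mul_cancel₀ (by positivity : (d:ℝ) ≠ 0)]
  rw [h2]
  have h3 : (∑ i, z i) / d = ∑ i, (d:ℝ)⁻¹ * z i := by
    rw [div_eq_inv_mul, Finset.mul_sum]
  rw [h3]
  exact pow_le_pow_left₀ (Finset.prod_nonneg fun i _ => Real.rpow_nonneg (hz i) _) hgm d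

lemma det_le_trace_pow {d : ℕ} (hd : 0 < d) (M : Matrix (Fin d) (Fin d) ℝ)
    (hM : M.PosSemidef) : M.det ≤ (M.trace / d) ^ d := by
  have htr : M.trace = ∑ i, hM.1.eigenvalues i := by
    have h := hM.1.spectral_theorem
    set U : Matrix (Fin d) (Fin d) ℝ := (hM.1.eigenvectorUnitary : Matrix (Fin d) (Fin d) ℝ)
    have hU : star U * U = 1 := Matrix.mem_unitaryGroup_iff'.mp hM.1.eigenvectorUnitary.2
    calc M.trace = (U * diagonal (RCLike.ofReal ∘ hM.1.eigenvalues) * star U).trace := by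
          exact congrArg Matrix.trace h
      _ = (star U * (U * diagonal (RCLike.ofReal ∘ hM.1.eigenvalues))).trace := by
          rw [trace_mul_comm]
      _ = (diagonal (RCLike.ofReal ∘ hM.1.eigenvalues)).trace := by
          rw [← mul_assoc, hU, one_mul]
      _ = ∑ i, hM.1.eigenvalues i := by simp [trace_diagonal]
  have hdet : M.det = ∏ i, hM.1.eigenvalues i := by
    simpa using hM.1.det_eq_prod_eigenvalues
  rw [htr, hdet]
  exact amgm hd _ (fun i => hM.eigenvalues_nonneg i)

lemma minlog (u : ℝ) (hu : 0 ≤ u) : min 1 u ≤ 2 * Real.log (1 + u) := by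
  rcases le_total u 1 with h | h
  · rw [min_eq_right h]
    have h1 : Real.log (1/(1+u)) ≤ 1/(1+u) - 1 :=
      Real.log_le_sub_one_of_pos (by positivity)
    rw [Real.log_div one_ne_zero (by positivity), Real.log_one] at h1
    have h2 : u / (1+u) ≤ Real.log (1+u) := by
      have h3 : (1:ℝ)/(1+u) - 1 = -(u/(1+u)) := by field_simp; ring
      linarith [h1, h3 ▸ h1]
    nlinarith [h2, div_le_div_of_nonneg_left hu (by positivity : (0:ℝ) < 1+u)
      (by linarith : (1:ℝ)+u ≤ 2)]
  · rw [min_eq_left h]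
    have h2 : Real.log 2 ≤ Real.log (1+u) :=
      Real.log_le_log (by norm_num) (by linarith)
    nlinarith [Real.log_two_gt_d9, h2]

lemma psd_vmv {d : ℕ} (v : Fin d → ℝ) (c : ℝ) (hc : 0 ≤ c) :
    (c • vecMulVec v v).PosSemidef := by
  constructor
  · unfold Matrix.IsHermitian
    ext i j
    simp [vecMulVec_apply, conjTranspose_apply, mul_comm]
  · have h := (posSemidef_vecMulVec_self_star v).smul hc
    simpa using h.2

lemma trace_vmv {d : ℕ} (v : Fin d → ℝ) :
    (vecMulVec v v).trace = v ⬝ᵥ v := by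
  simp [Matrix.trace, Matrix.diag, vecMulVec_apply, dotProduct]

lemma detlem {d : ℕ} (A : Matrix (Fin d) (Fin d) ℝ) (hA : A.PosDef) (v : Fin d → ℝ)
    (c : ℝ) :
    (A + c • vecMulVec v v).det = A.det * (1 + c * (v ⬝ᵥ A⁻¹ *ᵥ v)) := by
  have h1 : c • vecMulVec v v = replicateCol Unit (c • v) * replicateRow Unit v := by
    rw [vecMulVec_eq Unit]
    ext i j
    simp [mul_apply, replicateCol, replicateRow]; ring
  rw [h1, det_add_replicateCol_mul_replicateRow hA.det_pos.ne'.isUnit]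
  congr 1
  rw [det_unique]
  simp only [Matrix.add_apply, one_apply_eq]
  congr 1
  have h2 : (replicateRow Unit v * A⁻¹ * replicateCol Unit (c • v)) default default
      = v ⬝ᵥ A⁻¹ *ᵥ (c • v) := by
    simp [mul_apply, replicateRow, replicateCol, dotProduct, mulVec, Finset.mul_sum, Finset.sum_mul]
    rw [Finset.sum_comm]
    apply Finset.sum_congr rfl; intro i _
    apply Finset.sum_congr rfl; intro j _
    ring
  rw [h2, mulVec_smul, dotProduct_smul]
  simp [mul_comm]

set_option maxHeartbeats 1000000 in
/-- Elliptical-potential style bound with adaptive weights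
(Lemma B.1, Zhou & Gu 2022). -/
theorem stmt_2 (d K : ℕ) (hd : 0 < d) (hK : 0 < K)
    (α γ lam L : ℝ) (hα : 0 < α) (hγ : 0 < γ) (hlam : 0 < lam) (hL : 0 < L)
    (σ β : ℕ → ℝ)
    (hσ : ∀ k ∈ Finset.Icc 1 K, 0 ≤ σ k)
    (hβ : ∀ k ∈ Finset.Icc 1 K, 0 ≤ β k)
    (x : ℕ → Fin d → ℝ)
    (hx : ∀ k ∈ Finset.Icc 1 K, Real.sqrt (x k ⬝ᵥ x k) ≤ L)
    (σbar : ℕ → ℝ) (Z : ℕ → Matrix (Fin d) (Fin d) ℝ)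
    (hZ1 : Z 1 = lam • (1 : Matrix (Fin d) (Fin d) ℝ))
    (hσbar : ∀ k, 1 ≤ k →
      σbar k = max (σ k) (max α
        (γ * Real.sqrt (Real.sqrt (x k ⬝ᵥ (Z k)⁻¹.mulVec (x k))))))
    (hZ : ∀ k, 1 ≤ k →
      Z (k + 1) = Z k + ((σbar k) ^ 2)⁻¹ • vecMulVec (x k) (x k)) :
    ∑ k ∈ Finset.Icc 1 K, min 1 (β k * Real.sqrt (x k ⬝ᵥ (Z k)⁻¹.mulVec (x k))) ≤
      2 * d * Real.log (1 + K * L ^ 2 / (d * lam * α ^ 2)) +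
      2 * ((Finset.Icc 1 K).sup' (Finset.nonempty_Icc.2 hK) β) * γ ^ 2 * d *
        Real.log (1 + K * L ^ 2 / (d * lam * α ^ 2)) +
      2 * Real.sqrt (d * Real.log (1 + K * L ^ 2 / (d * lam * α ^ 2))) *
        Real.sqrt (∑ k ∈ Finset.Icc 1 K, β k ^ 2 * (σ k ^ 2 + α ^ 2)) := by
  set B := (Finset.Icc 1 K).sup' (Finset.nonempty_Icc.2 hK) β with hBdef
  set ι := Real.log (1 + K * L ^ 2 / (d * lam * α ^ 2)) with hιdef
  set q : ℕ → ℝ := fun k => x k ⬝ᵥ (Z k)⁻¹ *ᵥ x k with hqdef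
  set u : ℕ → ℝ := fun k => (σbar k ^ 2)⁻¹ * q k with hudef
  -- basic facts about σbar
  have hαs : ∀ k, 1 ≤ k → α ≤ σbar k := by
    intro k hk
    rw [hσbar k hk]
    exact le_max_of_le_right (le_max_left _ _)
  have hs0 : ∀ k, 1 ≤ k → 0 < σbar k := fun k hk => lt_of_lt_of_le hα (hαs k hk)
  -- the key induction: positive definiteness, determinant and trace formulas
  have key : ∀ k, 1 ≤ k → (Z k).PosDef ∧
      (Z k).det = lam ^ d * ∏ j ∈ Icc 1 (k-1), (1 + u j) ∧
      (Z k).trace = d * lam + ∑ j ∈ Icc 1 (k-1), (σbar j ^ 2)⁻¹ * (x j ⬝ᵥ x j) := by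
    intro k hk
    induction k, hk using Nat.le_induction with
    | base =>
      have hpd : (Z 1).PosDef := by
        rw [hZ1, smul_one_eq_diagonal]
        exact Matrix.PosDef.diagonal (fun _ => hlam)
      refine ⟨hpd, ?_, ?_⟩
      · rw [hZ1]
        simp [det_smul]
      · rw [hZ1]
        simp [trace_smul]
        ring
    | succ k hk ih =>
      obtain ⟨hpd, hdet, htr⟩ := ih
      have hrec := hZ k hk
      have hc : (0:ℝ) ≤ (σbar k ^ 2)⁻¹ := by positivity
      have hk1 : k - 1 + 1 = k := Nat.succ_pred_eq_of_pos hk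
      have hIcc : Icc 1 k = insert k (Icc 1 (k-1)) := by
        conv_lhs => rw [← hk1]
        rw [← Finset.insert_Icc_right_eq_Icc_add_one (by omega), hk1]
      have hknot : k ∉ Icc 1 (k-1) := by
        simp [Finset.mem_Icc]; omega
      refine ⟨?_, ?_, ?_⟩
      · rw [hrec]
        exact hpd.add_posSemidef (psd_vmv _ _ hc)
      · rw [hrec, detlem _ hpd, hdet]
        simp only [Nat.add_sub_cancel]
        rw [hIcc, Finset.prod_insert hknot]
        simp only [hudef]
        ring
      · rw [hrec, trace_add, trace_smul, trace_vmv, htr]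
        simp only [Nat.add_sub_cancel]
        rw [hIcc, Finset.sum_insert hknot]
        simp [smul_eq_mul]
        ring
  have hq0 : ∀ k, 1 ≤ k → 0 ≤ q k := by
    intro k hk
    have := ((key k hk).1.inv.posSemidef).dotProduct_mulVec_nonneg (x k)
    simpa using this
  have hu0 : ∀ k, 1 ≤ k → 0 ≤ u k := by
    intro k hk
    exact mul_nonneg (by positivity) (hq0 k hk)
  -- bound on the product of (1 + u j)
  have hC : (0:ℝ) < K * L ^ 2 / (d * lam * α ^ 2) := by positivity
  have hι : 0 < ι := Real.log_pos (by linarith)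
  obtain ⟨hpdK, hdetK, htrK⟩ := key (K+1) (by omega)
  simp only [Nat.add_sub_cancel] at hdetK htrK
  have htr_le : (Z (K+1)).trace ≤ d * lam + K * (L^2 / α^2) := by
    rw [htrK]
    gcongr ?_ + ?_
    · exact le_rfl
    have hbound : ∀ j ∈ Icc 1 K, (σbar j ^ 2)⁻¹ * (x j ⬝ᵥ x j) ≤ L^2 / α^2 := by
      intro j hj
      obtain ⟨hj1, hj2⟩ := Finset.mem_Icc.mp hj
      have hxx0 : 0 ≤ x j ⬝ᵥ x j := Finset.sum_nonneg fun i _ => mul_self_nonneg _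
      have hxx : x j ⬝ᵥ x j ≤ L^2 := by
        have := hx j hj
        nlinarith [Real.sq_sqrt hxx0, Real.sqrt_nonneg (x j ⬝ᵥ x j)]
      have hsa : α^2 ≤ σbar j ^ 2 := by nlinarith [hαs j hj1, hα]
      have h1 : (σbar j ^ 2)⁻¹ ≤ (α^2)⁻¹ := by
        exact inv_anti₀ (by positivity) hsa
      calc (σbar j ^ 2)⁻¹ * (x j ⬝ᵥ x j) ≤ (α^2)⁻¹ * L^2 := by
            apply mul_le_mul h1 hxx hxx0 (by positivity)
        _ = L^2 / α^2 := by ring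
    calc ∑ j ∈ Icc 1 K, (σbar j ^ 2)⁻¹ * (x j ⬝ᵥ x j)
        ≤ ∑ _j ∈ Icc 1 K, L^2/α^2 := Finset.sum_le_sum hbound
      _ = K * (L^2/α^2) := by
          rw [Finset.sum_const, Nat.card_Icc]
          simp

  -- product bound
  have hprod_le : ∏ j ∈ Icc 1 K, (1 + u j) ≤ (1 + K * L ^ 2 / (d * lam * α ^ 2)) ^ d := by
    have hdet_le := det_le_trace_pow hd _ hpdK.posSemidef
    rw [hdetK] at hdet_le
    have htrd : (Z (K+1)).trace / d ≤ lam * (1 + K * L ^ 2 / (d * lam * α ^ 2)) := by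
      rw [div_le_iff₀ (by positivity : (0:ℝ) < (d:ℝ))]
      have heq : lam * (1 + K * L ^ 2 / (d * lam * α ^ 2)) * d
          = d * lam + K * (L^2/α^2) := by
        field_simp
      rw [heq]
      exact htr_le
    have htr0 : (0:ℝ) ≤ (Z (K+1)).trace / d := by
      rw [htrK]
      have : (0:ℝ) ≤ ∑ j ∈ Icc 1 K, (σbar j ^ 2)⁻¹ * (x j ⬝ᵥ x j) :=
        Finset.sum_nonneg fun j hj => mul_nonneg (by positivity)
          (Finset.sum_nonneg fun i _ => mul_self_nonneg _)
      positivity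
    have h2 : lam ^ d * ∏ j ∈ Icc 1 K, (1 + u j)
        ≤ (lam * (1 + K * L ^ 2 / (d * lam * α ^ 2))) ^ d := by
      calc lam ^ d * ∏ j ∈ Icc 1 K, (1 + u j) ≤ ((Z (K+1)).trace / d) ^ d := hdet_le
        _ ≤ (lam * (1 + K * L ^ 2 / (d * lam * α ^ 2))) ^ d :=
            pow_le_pow_left₀ htr0 htrd d
    rw [mul_pow] at h2
    exact le_of_mul_le_mul_left (by linarith) (by positivity : (0:ℝ) < lam ^ d)
  -- sum of logs bound
  have hlogsum : ∑ j ∈ Icc 1 K, Real.log (1 + u j) ≤ d * ι := by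
    have hpos : ∀ j ∈ Icc 1 K, (0:ℝ) < 1 + u j := by
      intro j hj
      have := hu0 j (Finset.mem_Icc.mp hj).1
      linarith
    rw [← Real.log_prod (fun j hj => (hpos j hj).ne')]
    calc Real.log (∏ j ∈ Icc 1 K, (1 + u j))
        ≤ Real.log ((1 + K * L ^ 2 / (d * lam * α ^ 2)) ^ d) :=
          Real.log_le_log (Finset.prod_pos hpos) hprod_le
      _ = d * ι := by rw [Real.log_pow, hιdef]
  have hminsum : ∑ j ∈ Icc 1 K, min 1 (u j) ≤ 2 * (d * ι) := by
    calc ∑ j ∈ Icc 1 K, min 1 (u j)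
        ≤ ∑ j ∈ Icc 1 K, 2 * Real.log (1 + u j) :=
          Finset.sum_le_sum fun j hj => minlog _ (hu0 j (Finset.mem_Icc.mp hj).1)
      _ = 2 * ∑ j ∈ Icc 1 K, Real.log (1 + u j) := by rw [Finset.mul_sum]
      _ ≤ 2 * (d * ι) := by linarith
  -- nonnegativity of B
  have hB0 : 0 ≤ B := le_trans (hβ 1 (Finset.mem_Icc.mpr ⟨le_refl 1, hK⟩))
    (Finset.le_sup' β (Finset.mem_Icc.mpr ⟨le_refl 1, hK⟩))
  -- pointwise bound
  have hpoint : ∀ k ∈ Icc 1 K,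
      min 1 (β k * Real.sqrt (q k)) ≤ min 1 (u k) + B * γ^2 * min 1 (u k)
        + β k * Real.sqrt (σ k ^ 2 + α ^ 2) * Real.sqrt (min 1 (u k)) := by
    intro k hk
    obtain ⟨hk1, hk2⟩ := Finset.mem_Icc.mp hk
    have hqk : 0 ≤ q k := hq0 k hk1
    set w := Real.sqrt (q k) with hwdef
    have hw0 : 0 ≤ w := Real.sqrt_nonneg _
    have hwsq : w ^ 2 = q k := Real.sq_sqrt hqk
    have hsk0 : 0 < σbar k := hs0 k hk1
    have huk : u k = w ^ 2 / σbar k ^ 2 := by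
      simp only [hudef, hwsq]
      ring
    have huk0 : 0 ≤ u k := hu0 k hk1
    have hβk0 : 0 ≤ β k := hβ k hk
    have hβkB : β k ≤ B := Finset.le_sup' β hk
    have hT1 : 0 ≤ min 1 (u k) := le_min zero_le_one huk0
    have hT2 : 0 ≤ B * γ^2 * min 1 (u k) := by positivity
    have hT3 : 0 ≤ β k * Real.sqrt (σ k ^ 2 + α ^ 2) * Real.sqrt (min 1 (u k)) := by
      positivity
    rcases le_or_gt (σbar k) w with hcase | hcase
    · -- w ≥ σbar k : u ≥ 1
      have h1u : 1 ≤ u k := by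
        rw [huk, le_div_iff₀ (by positivity)]
        have h2 := pow_le_pow_left₀ hsk0.le hcase 2
        linarith
      rw [min_eq_left h1u]
      have h4 : min 1 (β k * w) ≤ 1 := min_le_left _ _
      have h5 : (0:ℝ) ≤ B * γ ^ 2 * 1 := by positivity
      have h6 : (0:ℝ) ≤ β k * Real.sqrt (σ k ^ 2 + α ^ 2) * Real.sqrt 1 := by positivity
      linarith
    · -- w < σbar k : u < 1
      have hu1 : u k ≤ 1 := by
        rw [huk, div_le_one (by positivity)]
        exact pow_le_pow_left₀ hw0 hcase.le 2
      rw [min_eq_right hu1]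
      have hσb : σbar k = max (max (σ k) α) (γ * Real.sqrt w) := by
        rw [hσbar k hk1, max_assoc]
      rcases le_total (γ * Real.sqrt w) (max (σ k) α) with hmx | hmx
      · -- σbar k = max (σ k) α
        have hsk : σbar k = max (σ k) α := by rw [hσb, max_eq_left hmx]
        have hsk2 : σbar k ^ 2 ≤ σ k ^ 2 + α ^ 2 := by
          rcases max_choice (σ k) α with h | h <;> rw [hsk, h] <;> nlinarith
        have hskR : σbar k ≤ Real.sqrt (σ k ^ 2 + α ^ 2) := by
          rw [show σbar k = Real.sqrt (σbar k ^ 2) from (Real.sqrt_sq hsk0.le).symm]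
          exact Real.sqrt_le_sqrt hsk2
        have hsqrtu : Real.sqrt (u k) = w / σbar k := by
          rw [huk, Real.sqrt_div (sq_nonneg w), Real.sqrt_sq hsk0.le, Real.sqrt_sq hw0]
        have hfin : β k * w ≤ β k * Real.sqrt (σ k ^ 2 + α ^ 2) * (w / σbar k) := by
          have hws : w = σbar k * (w / σbar k) := by field_simp
          calc β k * w = β k * σbar k * (w / σbar k) := by rw [mul_assoc, ← hws]
            _ ≤ β k * Real.sqrt (σ k ^ 2 + α ^ 2) * (w / σbar k) := by
                apply mul_le_mul_of_nonneg_right _ (by positivity)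
                exact mul_le_mul_of_nonneg_left hskR hβk0
        calc min 1 (β k * w) ≤ β k * w := min_le_right _ _
          _ ≤ β k * Real.sqrt (σ k ^ 2 + α ^ 2) * (w / σbar k) := hfin
          _ = β k * Real.sqrt (σ k ^ 2 + α ^ 2) * Real.sqrt (u k) := by rw [hsqrtu]
          _ ≤ u k + B * γ^2 * u k
              + β k * Real.sqrt (σ k ^ 2 + α ^ 2) * Real.sqrt (u k) := by
              have h2 : 0 ≤ B * γ^2 * u k := by positivity
              linarith
      · -- σbar k = γ * √w
        have hsk : σbar k = γ * Real.sqrt w := by rw [hσb, max_eq_right hmx]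
        have hsw0 : 0 < Real.sqrt w := by
          rcases lt_or_ge 0 (Real.sqrt w) with h | h
          · exact h
          · exfalso
            have : γ * Real.sqrt w ≤ 0 := mul_nonpos_of_nonneg_of_nonpos hγ.le h
            linarith [hsk0, hsk ▸ hsk0]
        have hwpos : 0 < w := by
          have := Real.sqrt_pos.mp hsw0
          exact this
        have hβw : β k * w = β k * γ^2 * u k := by
          have hsq : σbar k ^ 2 = γ^2 * w := by
            rw [hsk, mul_pow, Real.sq_sqrt hw0]
          rw [huk, hsq]
          field_simp
        calc min 1 (β k * w) ≤ β k * w := min_le_right _ _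
          _ = β k * γ^2 * u k := hβw
          _ ≤ B * γ^2 * u k :=
              mul_le_mul_of_nonneg_right
                (mul_le_mul_of_nonneg_right hβkB (sq_nonneg γ)) huk0
          _ ≤ u k + B * γ^2 * u k
              + β k * Real.sqrt (σ k ^ 2 + α ^ 2) * Real.sqrt (u k) := by
              have h3 : 0 ≤ β k * Real.sqrt (σ k ^ 2 + α ^ 2) * Real.sqrt (u k) := by
                positivity
              linarith
  -- assemble
  have hsum : ∑ k ∈ Icc 1 K, min 1 (β k * Real.sqrt (q k))
      ≤ ∑ k ∈ Icc 1 K, (min 1 (u k) + B * γ^2 * min 1 (u k)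
        + β k * Real.sqrt (σ k ^ 2 + α ^ 2) * Real.sqrt (min 1 (u k))) :=
    Finset.sum_le_sum hpoint
  have hsplit : ∑ k ∈ Icc 1 K, (min 1 (u k) + B * γ^2 * min 1 (u k)
        + β k * Real.sqrt (σ k ^ 2 + α ^ 2) * Real.sqrt (min 1 (u k)))
      = (∑ k ∈ Icc 1 K, min 1 (u k)) + B * γ^2 * (∑ k ∈ Icc 1 K, min 1 (u k))
        + ∑ k ∈ Icc 1 K, β k * Real.sqrt (σ k ^ 2 + α ^ 2) * Real.sqrt (min 1 (u k)) := by
    rw [Finset.sum_add_distrib, Finset.sum_add_distrib, Finset.mul_sum]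
  -- Cauchy-Schwarz for the third sum
  have hCS : ∑ k ∈ Icc 1 K, β k * Real.sqrt (σ k ^ 2 + α ^ 2) * Real.sqrt (min 1 (u k))
      ≤ Real.sqrt (∑ k ∈ Icc 1 K, β k ^ 2 * (σ k ^ 2 + α ^ 2))
        * Real.sqrt (∑ k ∈ Icc 1 K, min 1 (u k)) := by
    have h := Real.sum_mul_le_sqrt_mul_sqrt (Icc 1 K)
      (fun k => β k * Real.sqrt (σ k ^ 2 + α ^ 2)) (fun k => Real.sqrt (min 1 (u k)))
    have h1 : ∀ k ∈ Icc 1 K, (β k * Real.sqrt (σ k ^ 2 + α ^ 2)) ^ 2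
        = β k ^ 2 * (σ k ^ 2 + α ^ 2) := by
      intro k hk
      rw [mul_pow, Real.sq_sqrt (by positivity)]
    have h2 : ∀ k ∈ Icc 1 K, (Real.sqrt (min 1 (u k))) ^ 2 = min 1 (u k) := by
      intro k hk
      exact Real.sq_sqrt (le_min zero_le_one (hu0 k (Finset.mem_Icc.mp hk).1))
    rw [Finset.sum_congr rfl h1, Finset.sum_congr rfl h2] at h
    exact h
  have hmin_nonneg : 0 ≤ ∑ k ∈ Icc 1 K, min 1 (u k) :=
    Finset.sum_nonneg fun k hk => le_min zero_le_one (hu0 k (Finset.mem_Icc.mp hk).1)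
  have hsqrt_min : Real.sqrt (∑ k ∈ Icc 1 K, min 1 (u k)) ≤ 2 * Real.sqrt (d * ι) := by
    calc Real.sqrt (∑ k ∈ Icc 1 K, min 1 (u k)) ≤ Real.sqrt (2 * (d * ι)) :=
          Real.sqrt_le_sqrt hminsum
      _ = Real.sqrt 2 * Real.sqrt (d * ι) := Real.sqrt_mul (by norm_num) _
      _ ≤ 2 * Real.sqrt (d * ι) := by
          apply mul_le_mul_of_nonneg_right _ (Real.sqrt_nonneg _)
          nlinarith [Real.sq_sqrt (by norm_num : (0:ℝ) ≤ 2), Real.sqrt_nonneg 2]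
  have hsqrtS : 0 ≤ Real.sqrt (∑ k ∈ Icc 1 K, β k ^ 2 * (σ k ^ 2 + α ^ 2)) :=
    Real.sqrt_nonneg _
  calc ∑ k ∈ Icc 1 K, min 1 (β k * Real.sqrt (q k))
      ≤ (∑ k ∈ Icc 1 K, min 1 (u k)) + B * γ^2 * (∑ k ∈ Icc 1 K, min 1 (u k))
        + ∑ k ∈ Icc 1 K, β k * Real.sqrt (σ k ^ 2 + α ^ 2) * Real.sqrt (min 1 (u k)) := by
        rw [← hsplit]; exact hsum
    _ ≤ 2 * (d * ι) + B * γ^2 * (2 * (d * ι))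
        + Real.sqrt (∑ k ∈ Icc 1 K, β k ^ 2 * (σ k ^ 2 + α ^ 2))
          * (2 * Real.sqrt (d * ι)) := by
        have g2 : B * γ^2 * (∑ k ∈ Icc 1 K, min 1 (u k)) ≤ B * γ^2 * (2*(d*ι)) :=
          mul_le_mul_of_nonneg_left hminsum (by positivity)
        have g3 := hCS.trans (mul_le_mul_of_nonneg_left hsqrt_min hsqrtS)
        linarith
    _ = 2 * d * ι + 2 * B * γ ^ 2 * d * ι
        + 2 * Real.sqrt (d * ι)
          * Real.sqrt (∑ k ∈ Icc 1 K, β k ^ 2 * (σ k ^ 2 + α ^ 2)) := by ring
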